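/- For |z| < e, the integral ∫₀^∞ z e^{-u}/(1 - z u e^{-u}) du equals the power series ∑_{k=1}^∞ ((k-1)!/k^k) z^k. -/

import Mathlib

open MeasureTheory Real

private lemma aux_mul_exp_le (u : ℝ) : u * Real.exp (-u) ≤ (Real.exp 1)⁻¹ := by
  have h := Real.add_one_le_exp (u - 1)
  have h2 : Real.exp (u - 1) = Real.exp u * (Real.exp 1)⁻¹ := by
    rw [Real.exp_sub]; ring
  have hu : u ≤ Real.exp u * (Real.exp 1)⁻¹ := by rw [← h2]; linarith
  calc u * Real.exp (-u) ≤ (Real.exp u * (Real.exp 1)⁻¹) * Real.exp (-u) :=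
        mul_le_mul_of_nonneg_right hu (Real.exp_nonneg _)
    _ = (Real.exp 1)⁻¹ := by rw [mul_comm (Real.exp u), mul_assoc, ← Real.exp_add]; simp

private lemma aux_norm_lt (z : ℂ) (hz : ‖z‖ < Real.exp 1) (u : ℝ) (hu : 0 ≤ u) :
    ‖z * u * Complex.exp (-u)‖ < 1 := by
  have h1 : ‖z * u * Complex.exp (-u)‖ = ‖z‖ * (u * Real.exp (-u)) := by
    rw [norm_mul, norm_mul, Complex.norm_exp]
    simp [abs_of_nonneg hu, mul_assoc]
  rw [h1]
  calc ‖z‖ * (u * Real.exp (-u)) ≤ ‖z‖ * (Real.exp 1)⁻¹ :=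
        mul_le_mul_of_nonneg_left (aux_mul_exp_le u) (norm_nonneg _)
    _ < 1 := by
        rw [mul_inv_lt_iff₀ (Real.exp_pos 1)]; simpa using hz

private lemma aux_int (n : ℕ) : IntegrableOn
    (fun u : ℝ => u ^ n * Real.exp (-((n + 1 : ℝ) * u))) (Set.Ioi 0) := by
  have h := integrableOn_rpow_mul_exp_neg_mul_rpow (p := 1) (s := n) (b := (n + 1 : ℝ))
    (by have : (0:ℝ) ≤ n := n.cast_nonneg; linarith) zero_lt_one (by positivity)
  refine h.congr_fun (fun x hx => ?_) measurableSet_Ioi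
  beta_reduce
  rw [Real.rpow_one, Real.rpow_natCast, neg_mul]

private lemma aux_eval (n : ℕ) :
    ∫ u in Set.Ioi (0:ℝ), u ^ n * Real.exp (-((n + 1 : ℝ) * u)) =
    (n.factorial : ℝ) / (n + 1 : ℝ) ^ (n + 1) := by
  have h := Real.integral_rpow_mul_exp_neg_mul_Ioi (a := (n + 1 : ℝ)) (r := (n + 1 : ℝ))
    (by positivity) (by positivity)
  rw [show ((n:ℝ) + 1 - 1) = (n:ℝ) by ring, Real.Gamma_nat_eq_factorial,
    show ((n:ℝ) + 1) = ((n + 1 : ℕ) : ℝ) by push_cast; ring, Real.rpow_natCast] at h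
  rw [show (∫ u in Set.Ioi (0:ℝ), u ^ n * Real.exp (-((n + 1 : ℝ) * u)))
      = ∫ t in Set.Ioi (0:ℝ), t ^ (n:ℝ) * Real.exp (-((n + 1 : ℝ) * t)) from
    setIntegral_congr_fun measurableSet_Ioi (fun x hx => by rw [Real.rpow_natCast])]
  push_cast at h ⊢
  rw [h, div_pow, one_pow, div_mul_eq_mul_div, one_mul]

private lemma aux_Feq (z : ℂ) (n : ℕ) (u : ℝ) :
    z * Complex.exp (-u) * (z * u * Complex.exp (-u))^n
      = z^(n+1) * ((u^n * Real.exp (-((n+1:ℝ)*u)) : ℝ) : ℂ) := by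
  rw [mul_pow, mul_pow]
  push_cast [Complex.ofReal_exp]
  rw [show (-((((n:ℂ))+1)*u)) = ((n+1 : ℕ) : ℂ) * (-u) by push_cast; ring,
    Complex.exp_nat_mul]
  ring

private lemma aux_bound (n : ℕ) :
    (n.factorial : ℝ) / (n + 1 : ℝ) ^ (n + 1) ≤ ((Real.exp 1)⁻¹) ^ n := by
  rw [← aux_eval n]
  have h2 : IntegrableOn (fun u : ℝ => ((Real.exp 1)⁻¹) ^ n * Real.exp (-u))
      (Set.Ioi 0) := by
    have h3 := (exp_neg_integrableOn_Ioi (0:ℝ) (zero_lt_one (α := ℝ))).const_mul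
      (((Real.exp 1)⁻¹) ^ n)
    simpa [neg_mul, one_mul, IntegrableOn] using h3
  calc (∫ u in Set.Ioi (0:ℝ), u ^ n * Real.exp (-((n + 1 : ℝ) * u)))
      ≤ ∫ u in Set.Ioi (0:ℝ), ((Real.exp 1)⁻¹) ^ n * Real.exp (-u) := by
        refine setIntegral_mono_on (aux_int n) h2 measurableSet_Ioi (fun u hu => ?_)
        have key : u ^ n * Real.exp (-((n + 1 : ℝ) * u))
            = (u * Real.exp (-u)) ^ n * Real.exp (-u) := by
          rw [mul_pow, show (-((n + 1 : ℝ) * u)) = ((n+1 : ℕ) : ℝ) * (-u) by push_cast; ring,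
            Real.exp_nat_mul]
          ring
        rw [key]
        have hu0 : (0:ℝ) ≤ u := le_of_lt hu
        exact mul_le_mul_of_nonneg_right
          (pow_le_pow_left₀ (by positivity) (aux_mul_exp_le u) n) (Real.exp_nonneg _)
    _ = ((Real.exp 1)⁻¹) ^ n := by
        rw [MeasureTheory.integral_const_mul, integral_exp_neg_Ioi_zero, mul_one]

/-- For `|z| < e`, the integral `∫₀^∞ z e^{-u}/(1 - z u e^{-u}) du` equals the
power series `∑_{k=1}^∞ ((k-1)!/k^k) z^k` (written with index shift `k = n+1`). -/
theorem integral_eq_tsum_factorial_series (z : ℂ) (hz : ‖z‖ < Real.exp 1) :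
    ∫ u in Set.Ioi (0:ℝ), z * Complex.exp (-u) / (1 - z * u * Complex.exp (-u)) =
      ∑' n : ℕ, ((n.factorial : ℂ) / ((n + 1 : ℕ) : ℂ) ^ (n + 1)) * z ^ (n + 1) := by
  set F : ℕ → ℝ → ℂ := fun n u => z * Complex.exp (-u) * (z * u * Complex.exp (-u))^n with hF
  -- integrability of each term
  have hInt : ∀ n, Integrable (F n) (volume.restrict (Set.Ioi 0)) := by
    intro n
    have : Integrable (fun u : ℝ =>
        z^(n+1) * ((u^n * Real.exp (-((n+1:ℝ)*u)) : ℝ) : ℂ))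
        (volume.restrict (Set.Ioi 0)) := ((aux_int n).ofReal).const_mul _
    exact this.congr (Filter.Eventually.of_forall fun u => (aux_Feq z n u).symm)
  -- value of each integral
  have hEval : ∀ n, ∫ u in Set.Ioi (0:ℝ), F n u
      = z^(n+1) * (((n.factorial : ℝ) / (n + 1 : ℝ) ^ (n + 1) : ℝ) : ℂ) := by
    intro n
    rw [show (∫ u in Set.Ioi (0:ℝ), F n u)
        = ∫ u in Set.Ioi (0:ℝ), z^(n+1) * ((u^n * Real.exp (-((n+1:ℝ)*u)) : ℝ) : ℂ) from
      setIntegral_congr_fun measurableSet_Ioi (fun u _ => aux_Feq z n u),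
      MeasureTheory.integral_const_mul]
    congr 1
    rw [← aux_eval n]
    exact integral_ofReal
  -- summability of the norms of the integrals
  have hSum : Summable fun n => ∫ u in Set.Ioi (0:ℝ), ‖F n u‖ := by
    have hval : ∀ n, (∫ u in Set.Ioi (0:ℝ), ‖F n u‖)
        = ‖z‖^(n+1) * ((n.factorial : ℝ) / (n + 1 : ℝ) ^ (n + 1)) := by
      intro n
      rw [show (∫ u in Set.Ioi (0:ℝ), ‖F n u‖)
          = ∫ u in Set.Ioi (0:ℝ), ‖z‖^(n+1) * (u^n * Real.exp (-((n+1:ℝ)*u))) from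
        setIntegral_congr_fun measurableSet_Ioi (fun u hu => by
          simp only [hF]
          have hu' : (0:ℝ) < u := hu
          rw [aux_Feq z n u, norm_mul, norm_pow, Complex.norm_real,
            Real.norm_of_nonneg (by positivity)]),
        MeasureTheory.integral_const_mul, aux_eval n]
    apply Summable.congr _ (fun n => (hval n).symm)
    have hgeo : Summable (fun n : ℕ => ‖z‖ * (‖z‖ * (Real.exp 1)⁻¹) ^ n) := by
      refine Summable.mul_left _ (summable_geometric_of_lt_one (by positivity) ?_)
      rw [mul_inv_lt_iff₀ (Real.exp_pos 1)]; simpa using hz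
    refine Summable.of_nonneg_of_le (fun n => by positivity) (fun n => ?_) hgeo
    calc ‖z‖^(n+1) * ((n.factorial : ℝ) / (n + 1 : ℝ) ^ (n + 1))
        ≤ ‖z‖^(n+1) * ((Real.exp 1)⁻¹) ^ n :=
          mul_le_mul_of_nonneg_left (aux_bound n) (by positivity)
      _ = ‖z‖ * (‖z‖ * (Real.exp 1)⁻¹) ^ n := by rw [pow_succ, mul_pow]; ring
  -- pointwise geometric series expansion
  have hpt : ∀ u ∈ Set.Ioi (0:ℝ),
      z * Complex.exp (-u) / (1 - z * u * Complex.exp (-u)) = ∑' n, F n u := by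
    intro u hu
    have hw := aux_norm_lt z hz u (le_of_lt hu)
    simp only [hF]
    rw [tsum_mul_left, tsum_geometric_of_norm_lt_one hw, div_eq_mul_inv]
  rw [setIntegral_congr_fun measurableSet_Ioi hpt,
    ← integral_tsum_of_summable_integral_norm hInt hSum]
  refine tsum_congr fun n => ?_
  rw [hEval n]
  push_cast
  ring
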